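/- Let σ ∈ {+1,−1} and let N₁,N₂,N₃,N₄ ∈ ℝ⁴ have Gram matrix G_{ij} = ⟪N_i,N_j⟫ with In(G) = In(η_σ). Fix i and let {j,k,l} = {1,2,3,4} \ {i}. If the 3×3 principal submatrix G_{\hat i} of G obtained by deleting the i-th row and column is nondegenerate, then N_j,N_k,N_l are linearly independent, and there exists V ∈ ℝ⁴ with ⟪V,V⟫ = σ and ⟪V,N_j⟫ = ⟪V,N_k⟫ = ⟪V,N_l⟫ = 0 if and only if In(G_{\hat i}) = (1,2). -/

import Mathlib

open Matrix

noncomputable section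

/-- Ambient metric: `η_{+1} = diag(-1,1,1,1)`, `η_{-1} = diag(-1,-1,1,1)`. -/
def eta (σ : ℝ) : Matrix (Fin 4) (Fin 4) ℝ := Matrix.diagonal ![-1, σ, 1, 1]

/-- Ambient bilinear form `⟪X,Y⟫ = Xᵀ η_σ Y`. -/
def ip (σ : ℝ) (X Y : Fin 4 → ℝ) : ℝ := X ⬝ᵥ (eta σ *ᵥ Y)

/-- Inertia `In(G) = (n₋(G), n₊(G))`: the numbers of negative and positive eigenvalues of a
real symmetric matrix, counted with multiplicity. -/
def inertia {n : ℕ} (G : Matrix (Fin n) (Fin n) ℝ) : ℕ × ℕ :=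
  if hG : G.IsHermitian then
    ((Finset.univ.filter fun i => hG.eigenvalues i < 0).card,
     (Finset.univ.filter fun i => 0 < hG.eigenvalues i).card)
  else (0, 0)

namespace VR
lemma ip_expand (σ : ℝ) (X Y : Fin 4 → ℝ) :
    ip σ X Y = -(X 0 * Y 0) + σ * (X 1 * Y 1) + X 2 * Y 2 + X 3 * Y 3 := by
  simp [ip, eta, Matrix.mulVec_diagonal, dotProduct, Fin.sum_univ_four]
  ring

lemma ip_comm (σ : ℝ) (X Y : Fin 4 → ℝ) : ip σ X Y = ip σ Y X := by
  rw [ip_expand, ip_expand]; ring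

def rows (n : Fin 3 → Fin 4 → ℝ) (X : Fin 4 → ℝ) : Matrix (Fin 4) (Fin 4) ℝ :=
  Matrix.of ![n 0, n 1, n 2, X]

lemma rows_castSucc (n : Fin 3 → Fin 4 → ℝ) (X : Fin 4 → ℝ) (a : Fin 3) :
    rows n X (Fin.castSucc a) = n a := by
  funext b
  fin_cases a <;> rfl

lemma rows_last (n : Fin 3 → Fin 4 → ℝ) (X : Fin 4 → ℝ) :
    rows n X 3 = X := by funext b; simp [rows, Matrix.of_apply]

lemma rows_eq_update (n : Fin 3 → Fin 4 → ℝ) (X Y : Fin 4 → ℝ) :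
    rows n X = (rows n Y).updateRow 3 X := by
  ext a b
  by_cases h : a = 3
  · subst h; simp [rows, Matrix.of_apply]
  · rw [Matrix.updateRow_ne h]
    fin_cases a <;> simp_all [rows, Matrix.of_apply]

def detRow (n : Fin 3 → Fin 4 → ℝ) : (Fin 4 → ℝ) →ₗ[ℝ] ℝ where
  toFun X := (rows n X).det
  map_add' X Y := by
    show (rows n (X + Y)).det = (rows n X).det + (rows n Y).det
    rw [rows_eq_update n (X + Y) 0, rows_eq_update n X 0, rows_eq_update n Y 0,
      Matrix.det_updateRow_add]
  map_smul' t X := by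
    show (rows n (t • X)).det = (RingHom.id ℝ) t • (rows n X).det
    rw [rows_eq_update n (t • X) 0, rows_eq_update n X 0, Matrix.det_updateRow_smul]
    simp

lemma detRow_apply (n : Fin 3 → Fin 4 → ℝ) (X : Fin 4 → ℝ) :
    detRow n X = (rows n X).det := rfl

lemma detRow_eq_sum (n : Fin 3 → Fin 4 → ℝ) (X : Fin 4 → ℝ) :
    (rows n X).det = ∑ m, X m * (rows n (Pi.single m 1)).det := by
  have hX : X = ∑ m, Pi.single m (X m) := by
    funext j
    rw [Finset.sum_apply]
    exact (Fintype.sum_pi_single j X).symm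
  calc (rows n X).det = detRow n X := rfl
    _ = detRow n (∑ m, Pi.single m (X m)) := by rw [← hX]
    _ = ∑ m, detRow n (Pi.single m (X m)) := map_sum _ _ _
    _ = ∑ m, X m * (rows n (Pi.single m 1)).det := by
        refine Finset.sum_congr rfl fun m _ => ?_
        have h1 : (Pi.single m (X m) : Fin 4 → ℝ) = X m • (Pi.single m 1 : Fin 4 → ℝ) := by
          funext j
          by_cases h : j = m <;> simp [Pi.single_apply, h]
        rw [h1, _root_.map_smul, smul_eq_mul, detRow_apply]

def V0 (σ : ℝ) (n : Fin 3 → Fin 4 → ℝ) : Fin 4 → ℝ :=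
  eta σ *ᵥ fun m => (rows n (Pi.single m 1)).det

lemma ip_V0 (σ : ℝ) (hσ : σ = 1 ∨ σ = -1) (n : Fin 3 → Fin 4 → ℝ) (X : Fin 4 → ℝ) :
    ip σ (V0 σ n) X = (rows n X).det := by
  rw [detRow_eq_sum, ip_expand, Fin.sum_univ_four]
  rcases hσ with h | h <;> subst h <;>
    simp [V0, eta, Matrix.mulVec_diagonal] <;> ring

def Ghat (σ : ℝ) (n : Fin 3 → Fin 4 → ℝ) : Matrix (Fin 3) (Fin 3) ℝ :=
  Matrix.of fun a b => ip σ (n a) (n b)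

lemma castSucc_ne_three (a : Fin 3) : Fin.castSucc a ≠ (3 : Fin 4) := by
  apply Fin.ne_of_val_ne
  have := a.isLt
  simp [Fin.castSucc, Fin.castAdd, Fin.castLE]
  omega

lemma ip_V0_n (σ : ℝ) (hσ : σ = 1 ∨ σ = -1) (n : Fin 3 → Fin 4 → ℝ) (a : Fin 3) :
    ip σ (V0 σ n) (n a) = 0 := by
  rw [ip_V0 σ hσ]
  refine Matrix.det_zero_of_row_eq (castSucc_ne_three a) ?_
  rw [rows_castSucc, rows_last]

@[simp] lemma rows_zero (n : Fin 3 → Fin 4 → ℝ) (X : Fin 4 → ℝ) : rows n X 0 = n 0 := rfl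
@[simp] lemma rows_one (n : Fin 3 → Fin 4 → ℝ) (X : Fin 4 → ℝ) : rows n X 1 = n 1 := rfl
@[simp] lemma rows_two (n : Fin 3 → Fin 4 → ℝ) (X : Fin 4 → ℝ) : rows n X 2 = n 2 := rfl

lemma mul_eta_mul_transpose_apply (σ : ℝ) (M : Matrix (Fin 4) (Fin 4) ℝ) (a b : Fin 4) :
    (M * eta σ * Mᵀ) a b = ip σ (M a) (M b) := by
  rw [ip_expand]
  simp [Matrix.mul_apply, eta, Matrix.mul_diagonal, Fin.sum_univ_four, Matrix.transpose_apply]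
  ring

lemma det_eta (σ : ℝ) : (eta σ).det = -σ := by
  simp [eta, Matrix.det_diagonal, Fin.prod_univ_four]

lemma three_eq_last : (3 : Fin 4) = Fin.last 3 := rfl

lemma key_det (σ : ℝ) (hσ : σ = 1 ∨ σ = -1) (n : Fin 3 → Fin 4 → ℝ) :
    (ip σ (V0 σ n) (V0 σ n)) * (ip σ (V0 σ n) (V0 σ n)) * (-σ)
      = (ip σ (V0 σ n) (V0 σ n)) * (Ghat σ n).det := by
  set W := V0 σ n with hW
  set M := rows n W with hM
  set B := M * eta σ * Mᵀ with hBdef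
  have hB : ∀ a b, B a b = ip σ (M a) (M b) := fun a b => mul_eta_mul_transpose_apply σ M a b
  have hq : M.det = ip σ W W := (ip_V0 σ hσ n W).symm
  have z0 : B 3 0 = 0 := by rw [hB, hM, rows_last, rows_zero]; exact ip_V0_n σ hσ n 0
  have z1 : B 3 1 = 0 := by rw [hB, hM, rows_last, rows_one]; exact ip_V0_n σ hσ n 1
  have z2 : B 3 2 = 0 := by rw [hB, hM, rows_last, rows_two]; exact ip_V0_n σ hσ n 2
  have h4 : B 3 3 = ip σ W W := by rw [hB, hM, rows_last]
  have h1 : B.det = (ip σ W W) * (ip σ W W) * (-σ) := by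
    rw [hBdef, Matrix.det_mul, Matrix.det_mul, Matrix.det_transpose, det_eta, hq]
    ring
  have h3 : B.submatrix (Fin.succAbove 3) (Fin.succAbove 3) = Ghat σ n := by
    ext a b
    have hsa : (3 : Fin 4).succAbove = Fin.castSucc := by
      rw [three_eq_last, Fin.succAbove_last]
    rw [Matrix.submatrix_apply, hsa, hB, hM, rows_castSucc, rows_castSucc]
    rfl
  have h2 : B.det = B 3 3 * (Ghat σ n).det := by
    rw [Matrix.det_succ_row B 3, Fin.sum_univ_four, z0, z1, z2, h3]
    norm_num
  rw [← h1, h2, h4]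

lemma ip_zero_left (σ : ℝ) (Y : Fin 4 → ℝ) : ip σ 0 Y = 0 := by simp [ip_expand]

lemma ip_smul_left (σ : ℝ) (t : ℝ) (X Y : Fin 4 → ℝ) : ip σ (t • X) Y = t * ip σ X Y := by
  simp [ip_expand]; ring

lemma ip_sum3_left (σ : ℝ) (v : Fin 3 → Fin 4 → ℝ) (c : Fin 3 → ℝ) (Y : Fin 4 → ℝ) :
    ip σ (∑ a, c a • v a) Y = ∑ a, c a * ip σ (v a) Y := by
  simp only [ip_expand, Finset.sum_apply, Pi.smul_apply, Pi.add_apply, smul_eq_mul, Fin.sum_univ_three]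
  ring

lemma ip_sum3_right (σ : ℝ) (v : Fin 3 → Fin 4 → ℝ) (c : Fin 3 → ℝ) (Y : Fin 4 → ℝ) :
    ip σ Y (∑ a, c a • v a) = ∑ a, c a * ip σ Y (v a) := by
  rw [ip_comm, ip_sum3_left]
  exact Finset.sum_congr rfl fun a _ => by rw [ip_comm]

lemma mem_span_of_det_eq_zero (n : Fin 3 → Fin 4 → ℝ) (hn : LinearIndependent ℝ n)
    (X : Fin 4 → ℝ) (hX : (rows n X).det = 0) : X ∈ Submodule.span ℝ (Set.range n) := by
  obtain ⟨v, hv0, hv⟩ := Matrix.exists_vecMul_eq_zero_iff.mpr hX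
  have h : ∀ j, v 0 * n 0 j + v 1 * n 1 j + v 2 * n 2 j + v 3 * X j = 0 := by
    intro j
    have h2 := congrFun hv j
    simpa [Matrix.vecMul, dotProduct, Fin.sum_univ_four, rows, Matrix.of_apply]
      using h2
  by_cases h3 : v 3 = 0
  · exfalso
    have hz := Fintype.linearIndependent_iff.mp hn ![v 0, v 1, v 2] ?_
    · apply hv0
      funext m
      fin_cases m
      · exact hz 0
      · exact hz 1
      · exact hz 2
      · exact h3
    · funext j
      simp only [Finset.sum_apply, Pi.smul_apply, smul_eq_mul, Fin.sum_univ_three]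
      have h4 := h j
      rw [h3] at h4
      simp only [Matrix.cons_val_zero, Matrix.cons_val_one, Matrix.head_cons,
        Matrix.cons_val_two, Matrix.tail_cons, Pi.zero_apply]
      linarith
  · have hXeq : X = (-(v 3)⁻¹) • (v 0 • n 0 + v 1 • n 1 + v 2 • n 2) := by
      funext j
      have h4 := h j
      simp only [Pi.smul_apply, Pi.add_apply, smul_eq_mul]
      field_simp
      linarith
    rw [hXeq]
    refine Submodule.smul_mem _ _ (Submodule.add_mem _ (Submodule.add_mem _ ?_ ?_) ?_) <;>
      exact Submodule.smul_mem _ _ (Submodule.subset_span ⟨_, rfl⟩)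

lemma coeffs_zero (σ : ℝ) (n : Fin 3 → Fin 4 → ℝ) (hd : (Ghat σ n).det ≠ 0) (d : Fin 3 → ℝ)
    (h : ∀ b, ip σ (∑ a, d a • n a) (n b) = 0) : d = 0 := by
  have hvm : d ᵥ* (Ghat σ n) = 0 := by
    funext b
    have h2 := h b
    rw [ip_sum3_left] at h2
    simpa [Matrix.vecMul, dotProduct, Ghat, Matrix.of_apply] using h2
  have h1 := Matrix.mul_nonsing_inv (Ghat σ n) (isUnit_iff_ne_zero.mpr hd)
  calc d = d ᵥ* (1 : Matrix (Fin 3) (Fin 3) ℝ) := (Matrix.vecMul_one d).symm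
  _ = d ᵥ* ((Ghat σ n) * (Ghat σ n)⁻¹) := by rw [h1]
  _ = (d ᵥ* (Ghat σ n)) ᵥ* (Ghat σ n)⁻¹ := by rw [Matrix.vecMul_vecMul]
  _ = 0 := by rw [hvm]; simp

lemma indep (σ : ℝ) (n : Fin 3 → Fin 4 → ℝ) (hd : (Ghat σ n).det ≠ 0) :
    LinearIndependent ℝ n := by
  rw [Fintype.linearIndependent_iff]
  intro g hg a
  have hz : g = 0 := coeffs_zero σ n hd g (fun b => by rw [hg]; exact ip_zero_left σ (n b))
  exact congrFun hz a

lemma q_ne_zero (σ : ℝ) (hσ : σ = 1 ∨ σ = -1) (n : Fin 3 → Fin 4 → ℝ)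
    (hd : (Ghat σ n).det ≠ 0) : ip σ (V0 σ n) (V0 σ n) ≠ 0 := by
  intro hq
  have hn : LinearIndependent ℝ n := indep σ n hd
  have hdet0 : (rows n (V0 σ n)).det = 0 := by rw [← ip_V0 σ hσ n]; exact hq
  have hmem := mem_span_of_det_eq_zero n hn _ hdet0
  obtain ⟨d, hdsum⟩ := (Submodule.mem_span_range_iff_exists_fun ℝ).mp hmem
  have hd0 : d = 0 := coeffs_zero σ n hd d
    (fun b => by rw [hdsum]; exact ip_V0_n σ hσ n b)
  have hV0 : V0 σ n = 0 := by rw [← hdsum, hd0]; simp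
  have hall : ∀ X : Fin 4 → ℝ, (rows n X).det = 0 := by
    intro X; rw [← ip_V0 σ hσ n X, hV0]; exact ip_zero_left σ X
  have htop : Submodule.span ℝ (Set.range n) = ⊤ := by
    rw [Submodule.eq_top_iff']
    intro X
    exact mem_span_of_det_eq_zero n hn X (hall X)
  have h3 : Module.finrank ℝ (Submodule.span ℝ (Set.range n)) = 3 := by
    rw [finrank_span_eq_card hn]; simp
  rw [htop] at h3
  have h4 : Module.finrank ℝ (⊤ : Submodule ℝ (Fin 4 → ℝ)) = 4 := by
    rw [finrank_top]
    simp [Module.finrank_fintype_fun_eq_card]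
  omega

lemma quadform_neg {m : Type*} [Fintype m] [DecidableEq m] (A : Matrix m m ℝ)
    (hA : A.IsHermitian) (hneg : ∀ k, hA.eigenvalues k < 0) (c : m → ℝ) (hc : c ≠ 0) :
    c ⬝ᵥ (A *ᵥ c) < 0 := by
  set U : Matrix m m ℝ := (Matrix.IsHermitian.eigenvectorUnitary hA : Matrix m m ℝ) with hU
  have hUU : U * star U = 1 := by
    rw [hU]
    exact Matrix.mem_unitaryGroup_iff.mp (Matrix.IsHermitian.eigenvectorUnitary hA).2
  set y := star U *ᵥ c with hy
  have hyne : y ≠ 0 := by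
    intro h0
    apply hc
    have : c = U *ᵥ (star U *ᵥ c) := by
      rw [Matrix.mulVec_mulVec, hUU, Matrix.one_mulVec]
    rw [this, ← hy, h0, Matrix.mulVec_zero]
  have hval : c ⬝ᵥ (A *ᵥ c) = ∑ k, hA.eigenvalues k * (y k * y k) := by
    conv_lhs => rw [hA.spectral_theorem, Unitary.conjStarAlgAut_apply]
    rw [← Matrix.mulVec_mulVec, ← Matrix.mulVec_mulVec, dotProduct_mulVec c]
    have hcU : c ᵥ* U = y := by
      rw [hy, ← Matrix.mulVec_transpose, Matrix.star_eq_conjTranspose,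
        Matrix.conjTranspose_eq_transpose_of_trivial]
    rw [hcU]
    simp only [Matrix.mulVec_diagonal, dotProduct, Function.comp_apply,
      RCLike.ofReal_real_eq_id, id_eq]
    exact Finset.sum_congr rfl fun k _ => by ring
  rw [hval]
  obtain ⟨k0, hk0⟩ : ∃ k, y k ≠ 0 := by
    by_contra hall
    push_neg at hall
    exact hyne (funext hall)
  have hlt : ∑ k, hA.eigenvalues k * (y k * y k) < ∑ k : m, (0 : ℝ) := by
    refine Finset.sum_lt_sum (fun k _ => ?_) ⟨k0, Finset.mem_univ k0, ?_⟩
    · exact mul_nonpos_of_nonpos_of_nonneg (le_of_lt (hneg k)) (mul_self_nonneg _)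
    · exact mul_neg_of_neg_of_pos (hneg k0)
        (lt_of_le_of_ne (mul_self_nonneg _) (Ne.symm (mul_ne_zero hk0 hk0)))
  simpa using hlt

lemma inertia_iff (A : Matrix (Fin 3) (Fin 3) ℝ) (hA : A.IsHermitian) (hd : A.det ≠ 0)
    (hnn : ¬ ∀ k, hA.eigenvalues k < 0) :
    (A.det < 0 ↔ inertia A = (1, 2)) := by
  have hprod : A.det = hA.eigenvalues 0 * hA.eigenvalues 1 * hA.eigenvalues 2 := by
    have h := hA.det_eq_prod_eigenvalues
    rw [Fin.prod_univ_three] at h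
    simpa [RCLike.ofReal_real_eq_id] using h
  have hne : ∀ k, hA.eigenvalues k ≠ 0 := by
    intro k hk
    apply hd
    rw [hprod]
    fin_cases k
    · rw [show hA.eigenvalues 0 = 0 from hk]; ring
    · rw [show hA.eigenvalues 1 = 0 from hk]; ring
    · rw [show hA.eigenvalues 2 = 0 from hk]; ring
  have hin : inertia A =
      ((if hA.eigenvalues 0 < 0 then 1 else 0) + (if hA.eigenvalues 1 < 0 then 1 else 0)
        + (if hA.eigenvalues 2 < 0 then 1 else 0),
       (if 0 < hA.eigenvalues 0 then 1 else 0) + (if 0 < hA.eigenvalues 1 then 1 else 0)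
        + (if 0 < hA.eigenvalues 2 then 1 else 0)) := by
    unfold inertia
    rw [dif_pos hA]
    rw [Finset.card_filter, Finset.card_filter, Fin.sum_univ_three, Fin.sum_univ_three]
  rcases lt_or_gt_of_ne (hne 0) with h0 | h0 <;>
    rcases lt_or_gt_of_ne (hne 1) with h1 | h1 <;>
    rcases lt_or_gt_of_ne (hne 2) with h2 | h2
  · exact absurd (fun k => by fin_cases k <;> assumption) hnn
  · exact iff_of_false
      (by rw [hprod]; exact not_lt.mpr (le_of_lt (mul_pos (mul_pos_of_neg_of_neg h0 h1) h2)))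
      (by rw [hin]; norm_num [h0, h1, h2, asymm h0, asymm h1, asymm h2])
  · exact iff_of_false
      (by rw [hprod]; exact not_lt.mpr (le_of_lt (mul_pos_of_neg_of_neg (mul_neg_of_neg_of_pos h0 h1) h2)))
      (by rw [hin]; norm_num [h0, h1, h2, asymm h0, asymm h1, asymm h2])
  · exact iff_of_true
      (by rw [hprod]; exact mul_neg_of_neg_of_pos (mul_neg_of_neg_of_pos h0 h1) h2)
      (by rw [hin]; norm_num [h0, h1, h2, asymm h0, asymm h1, asymm h2])
  · exact iff_of_false
      (by rw [hprod]; exact not_lt.mpr (le_of_lt (mul_pos_of_neg_of_neg (mul_neg_of_pos_of_neg h0 h1) h2)))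
      (by rw [hin]; norm_num [h0, h1, h2, asymm h0, asymm h1, asymm h2])
  · exact iff_of_true
      (by rw [hprod]; exact mul_neg_of_neg_of_pos (mul_neg_of_pos_of_neg h0 h1) h2)
      (by rw [hin]; norm_num [h0, h1, h2, asymm h0, asymm h1, asymm h2])
  · exact iff_of_true
      (by rw [hprod]; exact mul_neg_of_pos_of_neg (mul_pos h0 h1) h2)
      (by rw [hin]; norm_num [h0, h1, h2, asymm h0, asymm h1, asymm h2])
  · exact iff_of_false
      (by rw [hprod]; exact not_lt.mpr (le_of_lt (mul_pos (mul_pos h0 h1) h2)))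
      (by rw [hin]; norm_num [h0, h1, h2, asymm h0, asymm h1, asymm h2])

lemma ghat_herm (σ : ℝ) (n : Fin 3 → Fin 4 → ℝ) : (Ghat σ n).IsHermitian := by
  show (Ghat σ n)ᴴ = Ghat σ n
  ext a b
  simp only [Matrix.conjTranspose_apply, Ghat, Matrix.of_apply, star_trivial]
  exact ip_comm σ (n b) (n a)

lemma quad_eq_ip (σ : ℝ) (n : Fin 3 → Fin 4 → ℝ) (c : Fin 3 → ℝ) :
    c ⬝ᵥ (Ghat σ n *ᵥ c) = ip σ (∑ a, c a • n a) (∑ a, c a • n a) := by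
  rw [ip_sum3_left]
  simp only [ip_sum3_right]
  simp only [dotProduct, Matrix.mulVec, Ghat, Matrix.of_apply, Fin.sum_univ_three]
  ring

lemma not_all_neg (σ : ℝ) (n : Fin 3 → Fin 4 → ℝ) (hA : (Ghat σ n).IsHermitian) :
    ¬ ∀ k, hA.eigenvalues k < 0 := by
  intro hall
  set T : (Fin 3 → ℝ) →ₗ[ℝ] (Fin 2 → ℝ) :=
    { toFun := fun c => ![∑ a, c a * n a 0, ∑ a, c a * n a 1],
      map_add' := by
        intro x y
        funext j
        fin_cases j <;>
          simp [← Finset.sum_add_distrib, add_mul]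
      map_smul' := by
        intro t x
        funext j
        fin_cases j <;>
          simp [Finset.mul_sum, mul_assoc] } with hT
  obtain ⟨c, hcmem, hc0⟩ : ∃ c : Fin 3 → ℝ, c ∈ LinearMap.ker T ∧ c ≠ 0 := by
    apply Submodule.exists_mem_ne_zero_of_ne_bot
    intro hbot
    have hrn := LinearMap.finrank_range_add_finrank_ker T
    rw [hbot] at hrn
    have h1 : Module.finrank ℝ (Fin 3 → ℝ) = 3 := by simp
    have h2 : Module.finrank ℝ (LinearMap.range T) ≤ 2 := by
      refine le_trans (Submodule.finrank_le _) ?_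
      simp
    rw [h1, finrank_bot] at hrn
    omega
  have hTc : T c = 0 := hcmem
  have hw0 : (∑ a, c a • n a) 0 = 0 := by
    have := congrFun hTc 0
    simpa [hT, Finset.sum_apply] using this
  have hw1 : (∑ a, c a • n a) 1 = 0 := by
    have := congrFun hTc 1
    simpa [hT, Finset.sum_apply] using this
  have hge : 0 ≤ c ⬝ᵥ (Ghat σ n *ᵥ c) := by
    rw [quad_eq_ip, ip_expand, hw0, hw1]
    nlinarith [mul_self_nonneg ((∑ a, c a • n a) 2), mul_self_nonneg ((∑ a, c a • n a) 3)]
  exact absurd (quadform_neg _ hA hall c hc0) (not_lt.mpr hge)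

lemma ip_smul_right (σ : ℝ) (t : ℝ) (X Y : Fin 4 → ℝ) : ip σ X (t • Y) = t * ip σ X Y := by
  simp [ip_expand]; ring

lemma ip_sub_left (σ : ℝ) (X Y Z : Fin 4 → ℝ) : ip σ (X - Y) Z = ip σ X Z - ip σ Y Z := by
  simp [ip_expand]; ring

lemma decomp (σ : ℝ) (hσ : σ = 1 ∨ σ = -1) (n : Fin 3 → Fin 4 → ℝ)
    (hd : (Ghat σ n).det ≠ 0) (V : Fin 4 → ℝ) (hV : ∀ a, ip σ V (n a) = 0) :
    ∃ t : ℝ, V = t • V0 σ n := by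
  have hq := q_ne_zero σ hσ n hd
  have hMdet : (rows n (V0 σ n)).det ≠ 0 := by rwa [ip_V0 σ hσ n] at hq
  set M := rows n (V0 σ n) with hM
  set v := V ᵥ* M⁻¹ with hv
  have hvM : v ᵥ* M = V := by
    rw [hv, Matrix.vecMul_vecMul, Matrix.nonsing_inv_mul M (isUnit_iff_ne_zero.mpr hMdet),
      Matrix.vecMul_one]
  have hpt : ∀ j, V j = v 0 * n 0 j + v 1 * n 1 j + v 2 * n 2 j + v 3 * V0 σ n j := by
    intro j
    have h2 := congrFun hvM j
    rw [← h2]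
    simp [Matrix.vecMul, dotProduct, Fin.sum_univ_four, hM, rows, Matrix.of_apply]
  have hsum : ∑ a, (![v 0, v 1, v 2] : Fin 3 → ℝ) a • n a = V - v 3 • V0 σ n := by
    funext j
    simp only [Finset.sum_apply, Pi.smul_apply, Pi.sub_apply, smul_eq_mul, Fin.sum_univ_three,
      Matrix.cons_val_zero, Matrix.cons_val_one, Matrix.head_cons, Matrix.cons_val_two,
      Matrix.tail_cons]
    have := hpt j
    linarith
  have hz : (![v 0, v 1, v 2] : Fin 3 → ℝ) = 0 := by
    apply coeffs_zero σ n hd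
    intro b
    rw [hsum, ip_sub_left, hV b, ip_smul_left, ip_V0_n σ hσ n b]
    ring
  refine ⟨v 3, ?_⟩
  have h4 : V - v 3 • V0 σ n = 0 := by rw [← hsum, hz]; simp
  have := sub_eq_zero.mp h4
  exact this

end VR

/-- Vertex reality: if the Gram matrix `G` of `N₁,…,N₄` has `In(G) = In(η_σ)` and the `3×3`
principal submatrix `G_{\hat i}` (deleting the `i`-th row and column, i.e. restricting to the
three indices `i.succAbove 0, i.succAbove 1, i.succAbove 2`) is nondegenerate, then the three
normals other than `N_i` are linearly independent, and there is a real vertex `V` with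
`⟪V,V⟫ = σ` orthogonal to those three normals iff `In(G_{\hat i}) = (1,2)`. -/
theorem vertex_reality (σ : ℝ) (hσ : σ = 1 ∨ σ = -1) (N : Fin 4 → (Fin 4 → ℝ))
    (G : Matrix (Fin 4) (Fin 4) ℝ) (hG : ∀ i j, G i j = ip σ (N i) (N j))
    (hIn : inertia G = inertia (eta σ)) (i : Fin 4)
    (hmin : (G.submatrix i.succAbove i.succAbove).det ≠ 0) :
    LinearIndependent ℝ (fun a : Fin 3 => N (i.succAbove a)) ∧
    ((∃ V : Fin 4 → ℝ, ip σ V V = σ ∧ ∀ a : Fin 3, ip σ V (N (i.succAbove a)) = 0) ↔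
      inertia (G.submatrix i.succAbove i.succAbove) = (1, 2)) := by
  have hGhat : G.submatrix i.succAbove i.succAbove
      = VR.Ghat σ (fun a => N (i.succAbove a)) := by
    ext a b
    simp [Matrix.submatrix_apply, hG, VR.Ghat]
  rw [hGhat] at hmin ⊢
  set n : Fin 3 → Fin 4 → ℝ := fun a => N (i.succAbove a) with hn
  constructor
  · exact VR.indep σ n hmin
  · have hA := VR.ghat_herm σ n
    have hiff := VR.inertia_iff (VR.Ghat σ n) hA hmin (VR.not_all_neg σ n hA)
    rw [← hiff]
    have hq : ip σ (VR.V0 σ n) (VR.V0 σ n) ≠ 0 := VR.q_ne_zero σ hσ n hmin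
    have hkey := VR.key_det σ hσ n
    have hdetq : (VR.Ghat σ n).det = ip σ (VR.V0 σ n) (VR.V0 σ n) * (-σ) := by
      have h5 : ip σ (VR.V0 σ n) (VR.V0 σ n) * (ip σ (VR.V0 σ n) (VR.V0 σ n) * (-σ))
          = ip σ (VR.V0 σ n) (VR.V0 σ n) * (VR.Ghat σ n).det := by
        linear_combination hkey
      exact (mul_left_cancel₀ hq h5).symm
    have hσne : σ ≠ 0 := by rcases hσ with h | h <;> rw [h] <;> norm_num
    constructor
    · rintro ⟨V, hVV, hVn⟩
      obtain ⟨t, rfl⟩ := VR.decomp σ hσ n hmin V hVn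
      rw [VR.ip_smul_left, VR.ip_smul_right] at hVV
      have ht : t ≠ 0 := by
        intro h0
        rw [h0] at hVV
        simp at hVV
        exact hσne hVV.symm
      have htq : t * ip σ (VR.V0 σ n) (VR.V0 σ n) ≠ 0 := mul_ne_zero ht hq
      have h6 : ip σ (VR.V0 σ n) (VR.V0 σ n) * -σ
          = -((t * ip σ (VR.V0 σ n) (VR.V0 σ n)) * (t * ip σ (VR.V0 σ n) (VR.V0 σ n))) := by
        linear_combination (ip σ (VR.V0 σ n) (VR.V0 σ n)) * hVV
      rw [hdetq, h6]
      exact neg_lt_zero.mpr (mul_self_pos.mpr htq)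
    · intro hdlt
      have hσq : 0 < σ * ip σ (VR.V0 σ n) (VR.V0 σ n) := by
        rw [hdetq] at hdlt
        nlinarith
      have hdivpos : 0 < σ / ip σ (VR.V0 σ n) (VR.V0 σ n) := by
        rcases mul_pos_iff.mp hσq with ⟨h1, h2⟩ | ⟨h1, h2⟩
        · exact div_pos h1 h2
        · exact div_pos_of_neg_of_neg h1 h2
      refine ⟨Real.sqrt (σ / ip σ (VR.V0 σ n) (VR.V0 σ n)) • VR.V0 σ n, ?_, ?_⟩
      · rw [VR.ip_smul_left, VR.ip_smul_right, ← mul_assoc,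
          Real.mul_self_sqrt hdivpos.le, div_mul_cancel₀ _ hq]
      · intro a
        rw [VR.ip_smul_left, VR.ip_V0_n σ hσ n a, mul_zero]
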